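/- Under the embedding γ ↦ γ^↑ of SL₂(ℤ) into Sp(2,ℤ) (acting on the first factor), the Weil representation satisfies ρ_{L,2}(γ^↑) e_{(λ₁,λ₂)} = ρ_{L,1}(γ) e_{λ₁} ⊗ e_{λ₂} for all γ ∈ SL₂(ℤ); similarly ρ_{L,2}(γ^↓) e_{(λ₁,λ₂)} = e_{λ₁} ⊗ ρ_{L,1}(γ) e_{λ₂}. -/

import Mathlib

open Matrix

noncomputable def stmt10e (r : ℚ) : ℂ :=
  Complex.exp (2 * (Real.pi : ℂ) * Complex.I * (r : ℂ))

noncomputable def stmt10S : Matrix.SpecialLinearGroup (Fin 2) ℤ :=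
  ⟨!![0, -1; 1, 0], by simp [Matrix.det_fin_two_of]⟩

noncomputable def stmt10T : Matrix.SpecialLinearGroup (Fin 2) ℤ :=
  ⟨!![1, 1; 0, 1], by simp [Matrix.det_fin_two_of]⟩

/-- The symplectic form matrix for `Sp(2,ℤ)` realized inside `4 × 4` integer matrices. -/
noncomputable def stmt10J : Matrix (Fin 4) (Fin 4) ℤ :=
  !![0, 0, 1, 0; 0, 0, 0, 1; -1, 0, 0, 0; 0, -1, 0, 0]

/-- `Sp(2,ℤ)` as a set of `4 × 4` integer matrices. -/
def stmt10Sp2 : Set (Matrix (Fin 4) (Fin 4) ℤ) :=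
  {g | gᵀ * stmt10J * g = stmt10J}

/-- The generator `S₂` of `Sp(2,ℤ)`. -/
noncomputable def stmt10S2 : Matrix (Fin 4) (Fin 4) ℤ :=
  !![0, 0, -1, 0; 0, 0, 0, -1; 1, 0, 0, 0; 0, 1, 0, 0]

/-- The generator `T₂(m)` of `Sp(2,ℤ)`. -/
noncomputable def stmt10T2 (m : Matrix (Fin 2) (Fin 2) ℤ) : Matrix (Fin 4) (Fin 4) ℤ :=
  !![1, 0, m 0 0, m 0 1; 0, 1, m 1 0, m 1 1; 0, 0, 1, 0; 0, 0, 0, 1]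

/-- The embedding `γ ↦ γ^↑ = l_{1,1}(γ, 1₂)` of `SL₂(ℤ)` into `Sp(2,ℤ)`. -/
noncomputable def stmt10up (γ : Matrix.SpecialLinearGroup (Fin 2) ℤ) :
    Matrix (Fin 4) (Fin 4) ℤ :=
  !![γ 0 0, 0, γ 0 1, 0; 0, 1, 0, 0; γ 1 0, 0, γ 1 1, 0; 0, 0, 0, 1]

/-- The embedding `γ ↦ γ^↓ = l_{1,1}(1₂, γ)` of `SL₂(ℤ)` into `Sp(2,ℤ)`. -/
noncomputable def stmt10down (γ : Matrix.SpecialLinearGroup (Fin 2) ℤ) :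
    Matrix (Fin 4) (Fin 4) ℤ :=
  !![1, 0, 0, 0; 0, γ 0 0, 0, γ 0 1; 0, 0, 1, 0; 0, γ 1 0, 0, γ 1 1]

noncomputable def stmt10tens {A : Type*} (f g : A → ℂ) : A × A → ℂ :=
  fun p => f p.1 * g p.2

section s10aux

open Matrix

lemma s10e_add (r s : ℚ) : stmt10e (r + s) = stmt10e r * stmt10e s := by
  unfold stmt10e
  rw [← Complex.exp_add]
  push_cast
  ring_nf

lemma s10e_ne_zero (r : ℚ) : stmt10e r ≠ 0 := Complex.exp_ne_zero _

lemma s10e_zero : stmt10e 0 = 1 := by simp [stmt10e]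

lemma s10e_neg (r : ℚ) : stmt10e (-r) = (stmt10e r)⁻¹ := by
  field_simp [s10e_ne_zero]
  rw [← s10e_add]
  simp [s10e_zero]

section tensorEnd
variable {A : Type*} [Fintype A] [DecidableEq A]

lemma s10_single_decomp (v : A → ℂ) : v = ∑ lam : A, v lam • (Pi.single lam 1 : A → ℂ) := by
  conv_lhs => rw [← Finset.univ_sum_single v]
  congr 1; funext lam
  funext x
  simp [Pi.single_apply]

lemma s10_apply_eq_sum (f : (A → ℂ) →ₗ[ℂ] (A → ℂ)) (v : A → ℂ) (x : A) :
    f v x = ∑ lam : A, v lam * f (Pi.single lam 1) x := by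
  conv_lhs => rw [s10_single_decomp v, map_sum]
  simp [Finset.sum_apply]

/-- tensor product of endomorphisms of function spaces -/
noncomputable def s10tE (f g : (A → ℂ) →ₗ[ℂ] (A → ℂ)) : (A × A → ℂ) →ₗ[ℂ] (A × A → ℂ) where
  toFun h := fun p => ∑ lam : A × A,
    h lam * f (Pi.single lam.1 1) p.1 * g (Pi.single lam.2 1) p.2
  map_add' u v := by
    funext p
    simp [add_mul, Finset.sum_add_distrib]
  map_smul' c u := by
    funext p
    simp only [Pi.smul_apply, smul_eq_mul, RingHom.id_apply]
    rw [Finset.mul_sum]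
    congr 1; funext lam; ring

lemma s10tE_apply (f g : (A → ℂ) →ₗ[ℂ] (A → ℂ)) (h : A × A → ℂ) (p : A × A) :
    s10tE f g h p = ∑ lam : A × A,
      h lam * f (Pi.single lam.1 1) p.1 * g (Pi.single lam.2 1) p.2 := rfl

lemma s10_single_prod (l1 l2 : A) :
    (Pi.single (l1, l2) 1 : A × A → ℂ) = stmt10tens (Pi.single l1 1) (Pi.single l2 1) := by
  funext p
  simp only [stmt10tens, Pi.single_apply, Prod.ext_iff]
  by_cases h1 : p.1 = l1 <;> by_cases h2 : p.2 = l2 <;> simp [h1, h2]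

lemma s10tens_smul_left (c : ℂ) (u v : A → ℂ) :
    stmt10tens (c • u) v = c • stmt10tens u v := by
  funext p
  simp only [stmt10tens, Pi.smul_apply, smul_eq_mul]
  ring

lemma s10tens_smul_right (c : ℂ) (u v : A → ℂ) :
    stmt10tens u (c • v) = c • stmt10tens u v := by
  funext p
  simp only [stmt10tens, Pi.smul_apply, smul_eq_mul]
  ring

lemma s10tE_tens (f g : (A → ℂ) →ₗ[ℂ] (A → ℂ)) (u v : A → ℂ) :
    s10tE f g (stmt10tens u v) = stmt10tens (f u) (g v) := by
  funext p
  rw [s10tE_apply]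
  show _ = f u p.1 * g v p.2
  rw [s10_apply_eq_sum f u p.1, s10_apply_eq_sum g v p.2, Finset.sum_mul_sum,
    Fintype.sum_prod_type]
  congr 1; funext l1
  congr 1; funext l2
  show stmt10tens u v (l1, l2) * _ * _ = _
  unfold stmt10tens
  ring

lemma s10tE_single (f g : (A → ℂ) →ₗ[ℂ] (A → ℂ)) (l1 l2 : A) :
    s10tE f g (Pi.single (l1, l2) 1) = stmt10tens (f (Pi.single l1 1)) (g (Pi.single l2 1)) := by
  rw [s10_single_prod, s10tE_tens]

lemma s10_end_ext {F G : (A × A → ℂ) →ₗ[ℂ] (A × A → ℂ)}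
    (h : ∀ lam : A × A, F (Pi.single lam 1) = G (Pi.single lam 1)) : F = G := by
  apply LinearMap.ext; intro v
  rw [s10_single_decomp v, map_sum, map_sum]
  congr 1; funext lam
  rw [LinearMap.map_smul, LinearMap.map_smul, h]

lemma s10tE_mul (f g f' g' : (A → ℂ) →ₗ[ℂ] (A → ℂ)) :
    s10tE f g * s10tE f' g' = s10tE (f * f') (g * g') := by
  apply s10_end_ext
  rintro ⟨l1, l2⟩
  show s10tE f g (s10tE f' g' _) = _
  rw [s10tE_single, s10tE_tens, s10tE_single]
  rfl

lemma s10tE_one : s10tE (1 : (A → ℂ) →ₗ[ℂ] (A → ℂ)) 1 = 1 := by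
  apply s10_end_ext
  rintro ⟨l1, l2⟩
  rw [s10tE_single]
  show _ = Pi.single (l1, l2) 1
  rw [s10_single_prod]
  rfl

lemma s10_eval_sum (c : ℂ) (d : A → ℂ) (x : A) :
    (c • ∑ μ : A, d μ • (Pi.single μ 1 : A → ℂ)) x = c * d x := by
  simp [Finset.sum_apply, Pi.single_apply]

lemma s10_eval_sum2 (c : ℂ) (d : A × A → ℂ) (x : A × A) :
    (c • ∑ μ : A × A, d μ • (Pi.single μ 1 : A × A → ℂ)) x = c * d x := by
  simp [Finset.sum_apply, Pi.single_apply]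

end tensorEnd

/-! ### `SL(2,ℤ)` facts -/

lemma s10_S_eq : stmt10S = ModularGroup.S := Subtype.ext rfl
lemma s10_T_eq : stmt10T = ModularGroup.T := Subtype.ext rfl

theorem s10_mem_closure (g : Matrix.SpecialLinearGroup (Fin 2) ℤ) :
    g ∈ Subgroup.closure ({stmt10S, stmt10T} : Set (Matrix.SpecialLinearGroup (Fin 2) ℤ)) := by
  rw [s10_S_eq, s10_T_eq]
  set H := Subgroup.closure
    ({ModularGroup.S, ModularGroup.T} : Set (Matrix.SpecialLinearGroup (Fin 2) ℤ)) with hH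
  have hS : ModularGroup.S ∈ H := Subgroup.subset_closure (by simp)
  have hT : ModularGroup.T ∈ H := Subgroup.subset_closure (by simp)
  suffices key : ∀ n : ℕ, ∀ g : Matrix.SpecialLinearGroup (Fin 2) ℤ,
      ((g : Matrix (Fin 2) (Fin 2) ℤ) 1 0).natAbs = n → g ∈ H by
    exact key _ g rfl
  intro n
  induction n using Nat.strong_induction_on with
  | _ n ih =>
    intro g hg
    have hdet : (g : Matrix (Fin 2) (Fin 2) ℤ) 0 0 * (g : Matrix (Fin 2) (Fin 2) ℤ) 1 1
        - (g : Matrix (Fin 2) (Fin 2) ℤ) 0 1 * (g : Matrix (Fin 2) (Fin 2) ℤ) 1 0 = 1 := by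
      have := g.2
      rwa [Matrix.det_fin_two] at this
    by_cases hc : (g : Matrix (Fin 2) (Fin 2) ℤ) 1 0 = 0
    · have had : (g : Matrix (Fin 2) (Fin 2) ℤ) 0 0 * (g : Matrix (Fin 2) (Fin 2) ℤ) 1 1 = 1 := by
        rw [hc] at hdet; omega
      rcases Int.eq_one_or_neg_one_of_mul_eq_one' had with ⟨h1, h2⟩ | ⟨h1, h2⟩
      · have hgeq : g = ModularGroup.T ^ ((g : Matrix (Fin 2) (Fin 2) ℤ) 0 1) := by
          apply Subtype.ext
          rw [ModularGroup.coe_T_zpow]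
          conv_lhs => rw [Matrix.eta_fin_two (g : Matrix (Fin 2) (Fin 2) ℤ)]
          rw [h1, h2, hc]
        rw [hgeq]; exact zpow_mem hT _
      · have hgeq : g = ModularGroup.S * ModularGroup.S
            * ModularGroup.T ^ (-((g : Matrix (Fin 2) (Fin 2) ℤ) 0 1)) := by
          apply Subtype.ext
          rw [Matrix.SpecialLinearGroup.coe_mul, Matrix.SpecialLinearGroup.coe_mul,
            ModularGroup.coe_T_zpow, ModularGroup.S_mul_S_eq]
          conv_lhs => rw [Matrix.eta_fin_two (g : Matrix (Fin 2) (Fin 2) ℤ)]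
          rw [h1, h2, hc]
          ext i j
          fin_cases i <;> fin_cases j <;> simp [Matrix.mul_apply, Fin.sum_univ_two]
        rw [hgeq]
        exact mul_mem (mul_mem hS hS) (zpow_mem hT _)
    · set a := (g : Matrix (Fin 2) (Fin 2) ℤ) 0 0 with ha
      set c := (g : Matrix (Fin 2) (Fin 2) ℤ) 1 0 with hcdef
      set q := a / c with hq
      set g' := ModularGroup.S * (ModularGroup.T ^ (-q) * g) with hg'def
      have hcoe : (g' : Matrix (Fin 2) (Fin 2) ℤ)
          = (ModularGroup.S : Matrix (Fin 2) (Fin 2) ℤ)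
            * (!![1, -q; 0, 1] * (g : Matrix (Fin 2) (Fin 2) ℤ)) := by
        rw [hg'def, Matrix.SpecialLinearGroup.coe_mul, Matrix.SpecialLinearGroup.coe_mul,
          ModularGroup.coe_T_zpow]
      have hentry : (g' : Matrix (Fin 2) (Fin 2) ℤ) 1 0 = a % c := by
        rw [hcoe]
        rw [Int.emod_def]
        simp [ModularGroup.coe_S, Matrix.mul_apply, Fin.sum_univ_two, Matrix.vecMul,
          dotProduct, Matrix.vecHead, Matrix.vecTail, ← ha, ← hcdef, ← hq]
        ring
      have hlt : ((g' : Matrix (Fin 2) (Fin 2) ℤ) 1 0).natAbs < n := by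
        rw [hentry, ← hg]
        have h1 : 0 ≤ a % c := Int.emod_nonneg a hc
        have h2 : a % c < |c| := by rw [Int.abs_eq_natAbs]; exact Int.emod_lt a hc
        rw [Int.abs_eq_natAbs] at h2
        omega
      have hg'mem : g' ∈ H := ih _ hlt g' rfl
      have hgeq : g = (ModularGroup.T ^ (-q))⁻¹ * (ModularGroup.S⁻¹ * g') := by
        rw [hg'def]; group
      rw [hgeq]
      exact mul_mem (inv_mem (zpow_mem hT _)) (mul_mem (inv_mem hS) hg'mem)

/-! ### `Sp(2,ℤ)` facts -/

lemma s10_sp2_mul {g h : Matrix (Fin 4) (Fin 4) ℤ}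
    (hg : g ∈ stmt10Sp2) (hh : h ∈ stmt10Sp2) : g * h ∈ stmt10Sp2 := by
  have hg' : gᵀ * stmt10J * g = stmt10J := hg
  have hh' : hᵀ * stmt10J * h = stmt10J := hh
  show (g * h)ᵀ * stmt10J * (g * h) = stmt10J
  calc (g * h)ᵀ * stmt10J * (g * h) = hᵀ * (gᵀ * stmt10J * g) * h := by
        rw [Matrix.transpose_mul]; simp only [Matrix.mul_assoc]
    _ = stmt10J := by rw [hg']; exact hh'

lemma s10_sp2_of_inv {g h : Matrix (Fin 4) (Fin 4) ℤ}
    (hg : g ∈ stmt10Sp2) (hgh : g * h = 1) : h ∈ stmt10Sp2 := by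
  have hg' : gᵀ * stmt10J * g = stmt10J := hg
  have key : (g * h)ᵀ * stmt10J * (g * h) = hᵀ * (gᵀ * stmt10J * g) * h := by
    rw [Matrix.transpose_mul]; simp only [Matrix.mul_assoc]
  rw [hgh, hg'] at key
  show hᵀ * stmt10J * h = stmt10J
  simpa using key.symm

/-- the inverse of `S₂`. -/
noncomputable def s10S2inv : Matrix (Fin 4) (Fin 4) ℤ :=
  !![0, 0, 1, 0; 0, 0, 0, 1; -1, 0, 0, 0; 0, -1, 0, 0]

lemma s10_mem_S2 : stmt10S2 ∈ stmt10Sp2 := by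
  show _ = _; ext i j; fin_cases i <;> fin_cases j <;> decide

lemma s10_mem_S2inv : s10S2inv ∈ stmt10Sp2 := by
  show _ = _; ext i j; fin_cases i <;> fin_cases j <;> decide

lemma s10_S2inv_mul : s10S2inv * stmt10S2 = 1 := by
  ext i j; fin_cases i <;> fin_cases j <;> decide

lemma s10_mem_T2E11 : stmt10T2 !![1, 0; 0, 0] ∈ stmt10Sp2 := by
  show _ = _; ext i j; fin_cases i <;> fin_cases j <;> decide

lemma s10_mem_T2mE11 : stmt10T2 !![-1, 0; 0, 0] ∈ stmt10Sp2 := by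
  show _ = _; ext i j; fin_cases i <;> fin_cases j <;> decide

lemma s10_mem_T2E22 : stmt10T2 !![0, 0; 0, 1] ∈ stmt10Sp2 := by
  show _ = _; ext i j; fin_cases i <;> fin_cases j <;> decide

lemma s10_mem_T2mE22 : stmt10T2 !![0, 0; 0, -1] ∈ stmt10Sp2 := by
  show _ = _; ext i j; fin_cases i <;> fin_cases j <;> decide

/-! ### matrix identities for the embeddings -/

lemma s10_up_one : stmt10up 1 = 1 := by
  ext i j
  fin_cases i <;> fin_cases j <;>
    simp [stmt10up, Matrix.SpecialLinearGroup.coe_one, Matrix.one_apply, Matrix.vecHead, Matrix.vecTail]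

lemma s10_down_one : stmt10down 1 = 1 := by
  ext i j
  fin_cases i <;> fin_cases j <;>
    simp [stmt10down, Matrix.SpecialLinearGroup.coe_one, Matrix.one_apply, Matrix.vecHead, Matrix.vecTail]

lemma s10_up_mul (γ δ : Matrix.SpecialLinearGroup (Fin 2) ℤ) :
    stmt10up (γ * δ) = stmt10up γ * stmt10up δ := by
  have h : ∀ i j, ((γ * δ : Matrix.SpecialLinearGroup (Fin 2) ℤ) : Matrix (Fin 2) (Fin 2) ℤ) i j
      = γ i 0 * δ 0 j + γ i 1 * δ 1 j := by
    intro i j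
    rw [Matrix.SpecialLinearGroup.coe_mul, Matrix.mul_apply, Fin.sum_univ_two]
  ext i j
  fin_cases i <;> fin_cases j <;>
    simp [stmt10up, Matrix.mul_apply, Fin.sum_univ_four, Matrix.vecHead, Matrix.vecTail, h] <;> ring

lemma s10_down_mul (γ δ : Matrix.SpecialLinearGroup (Fin 2) ℤ) :
    stmt10down (γ * δ) = stmt10down γ * stmt10down δ := by
  have h : ∀ i j, ((γ * δ : Matrix.SpecialLinearGroup (Fin 2) ℤ) : Matrix (Fin 2) (Fin 2) ℤ) i j
      = γ i 0 * δ 0 j + γ i 1 * δ 1 j := by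
    intro i j
    rw [Matrix.SpecialLinearGroup.coe_mul, Matrix.mul_apply, Fin.sum_univ_two]
  ext i j
  fin_cases i <;> fin_cases j <;>
    simp [stmt10down, Matrix.mul_apply, Fin.sum_univ_four, Matrix.vecHead, Matrix.vecTail, h] <;> ring

lemma s10_upT : stmt10up stmt10T = stmt10T2 !![1, 0; 0, 0] := by
  ext i j; fin_cases i <;> fin_cases j <;> decide

lemma s10_downT : stmt10down stmt10T = stmt10T2 !![0, 0; 0, 1] := by
  ext i j; fin_cases i <;> fin_cases j <;> decide

lemma s10_upS : stmt10up stmt10S =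
    stmt10T2 !![-1, 0; 0, 0] * s10S2inv * stmt10T2 !![-1, 0; 0, 0] * stmt10S2
      * stmt10T2 !![-1, 0; 0, 0] := by
  ext i j; fin_cases i <;> fin_cases j <;> decide

lemma s10_downS : stmt10down stmt10S =
    stmt10T2 !![0, 0; 0, -1] * s10S2inv * stmt10T2 !![0, 0; 0, -1] * stmt10S2
      * stmt10T2 !![0, 0; 0, -1] := by
  ext i j; fin_cases i <;> fin_cases j <;> decide

lemma s10_Tinv_coe :
    ((stmt10T⁻¹ : Matrix.SpecialLinearGroup (Fin 2) ℤ) : Matrix (Fin 2) (Fin 2) ℤ)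
      = !![1, -1; 0, 1] := by
  rw [Matrix.SpecialLinearGroup.coe_inv]
  have : (stmt10T : Matrix (Fin 2) (Fin 2) ℤ) = !![1, 1; 0, 1] := rfl
  rw [this, Matrix.adjugate_fin_two_of]
  norm_num

lemma s10_Sinv_coe :
    ((stmt10S⁻¹ : Matrix.SpecialLinearGroup (Fin 2) ℤ) : Matrix (Fin 2) (Fin 2) ℤ)
      = !![0, 1; -1, 0] := by
  rw [Matrix.SpecialLinearGroup.coe_inv]
  have : (stmt10S : Matrix (Fin 2) (Fin 2) ℤ) = !![0, -1; 1, 0] := rfl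
  rw [this, Matrix.adjugate_fin_two_of]
  norm_num

lemma s10_rel : stmt10T⁻¹ * stmt10S⁻¹ * stmt10T⁻¹ * stmt10S * stmt10T⁻¹ = stmt10S := by
  apply Subtype.ext
  rw [Matrix.SpecialLinearGroup.coe_mul, Matrix.SpecialLinearGroup.coe_mul,
    Matrix.SpecialLinearGroup.coe_mul, Matrix.SpecialLinearGroup.coe_mul,
    s10_Tinv_coe, s10_Sinv_coe]
  have h1 : (stmt10S : Matrix (Fin 2) (Fin 2) ℤ) = !![0, -1; 1, 0] := rfl
  rw [h1]
  ext i j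
  fin_cases i <;> fin_cases j <;> simp [Matrix.mul_apply, Fin.sum_univ_two]

end s10aux

/-- For the Weil representations `ρ_{L,1}` and `ρ_{L,2}` (given on the generators by the
standard formulas, with `ρ_{L,2}` multiplicative on `Sp(2,ℤ)`) one has
`ρ_{L,2}(γ^↑) e_{(λ₁,λ₂)} = ρ_{L,1}(γ) e_{λ₁} ⊗ e_{λ₂}` and
`ρ_{L,2}(γ^↓) e_{(λ₁,λ₂)} = e_{λ₁} ⊗ ρ_{L,1}(γ) e_{λ₂}` for all `γ ∈ SL₂(ℤ)`. -/
theorem stmt10 {A : Type*} [AddCommGroup A] [Fintype A] [DecidableEq A]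
    (sig : ℤ) (q : A → ℚ) (b : A → A → ℚ)
    (hbsymm : ∀ x y, b x y = b y x)
    (hbq : ∀ x y, stmt10e (q (x + y)) = stmt10e (q x) * stmt10e (q y) * stmt10e (b x y))
    (hMilgram : (∑ lam : A, stmt10e (q lam)) =
      (Real.sqrt (Fintype.card A) : ℂ) * stmt10e ((sig : ℚ) / 8))
    (ρ1 : Matrix.SpecialLinearGroup (Fin 2) ℤ →* ((A → ℂ) →ₗ[ℂ] (A → ℂ)))
    (ρ2 : Matrix (Fin 4) (Fin 4) ℤ → ((A × A → ℂ) →ₗ[ℂ] (A × A → ℂ)))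
    (hT1 : ∀ lam : A, ρ1 stmt10T ((Pi.single lam 1 : A → ℂ)) =
      stmt10e (q lam) • (Pi.single lam 1 : A → ℂ))
    (hS1 : ∀ lam : A, ρ1 stmt10S ((Pi.single lam 1 : A → ℂ)) =
      (stmt10e (-(sig : ℚ) / 8) / (Real.sqrt (Fintype.card A) : ℂ)) •
        ∑ μ : A, stmt10e (-(b μ lam)) • (Pi.single μ 1 : A → ℂ))
    (hone : ρ2 1 = 1)
    (hmul : ∀ g ∈ stmt10Sp2, ∀ h ∈ stmt10Sp2, ρ2 (g * h) = ρ2 g * ρ2 h)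
    (hT2 : ∀ m : Matrix (Fin 2) (Fin 2) ℤ, mᵀ = m → ∀ lam : A × A,
      ρ2 (stmt10T2 m) ((Pi.single lam 1 : A × A → ℂ)) =
        stmt10e ((m 0 0 : ℚ) * q lam.1 + (m 1 1 : ℚ) * q lam.2 +
          (m 0 1 : ℚ) * b lam.1 lam.2) • (Pi.single lam 1 : A × A → ℂ))
    (hS2 : ∀ lam : A × A, ρ2 stmt10S2 ((Pi.single lam 1 : A × A → ℂ)) =
      (stmt10e (-(2 * sig : ℚ) / 8) / (Fintype.card A : ℂ)) •
        ∑ μ : A × A, stmt10e (-(b μ.1 lam.1 + b μ.2 lam.2)) •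
          (Pi.single μ 1 : A × A → ℂ))
    (γ : Matrix.SpecialLinearGroup (Fin 2) ℤ) (lam₁ lam₂ : A) :
    ρ2 (stmt10up γ) ((Pi.single (lam₁, lam₂) 1 : A × A → ℂ)) =
      stmt10tens (ρ1 γ (Pi.single lam₁ 1 : A → ℂ)) (Pi.single lam₂ 1 : A → ℂ) ∧
    ρ2 (stmt10down γ) ((Pi.single (lam₁, lam₂) 1 : A × A → ℂ)) =
      stmt10tens (Pi.single lam₁ 1 : A → ℂ) (ρ1 γ (Pi.single lam₂ 1 : A → ℂ)) := by
  classical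
  -- scalar facts
  have hcard : (0:ℝ) < (Fintype.card A : ℝ) := by exact_mod_cast Fintype.card_pos
  have hsqrt_ne : ((Real.sqrt (Fintype.card A) : ℝ) : ℂ) ≠ 0 := by
    have h : (0:ℝ) < Real.sqrt (Fintype.card A) := Real.sqrt_pos.2 hcard
    exact_mod_cast h.ne'
  have hsq : ((Real.sqrt (Fintype.card A) : ℝ) : ℂ) * ((Real.sqrt (Fintype.card A) : ℝ) : ℂ)
      = (Fintype.card A : ℂ) := by
    rw [← Complex.ofReal_mul, Real.mul_self_sqrt hcard.le]
    norm_cast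
  have hcard_ne : (Fintype.card A : ℂ) ≠ 0 := by
    rw [← hsq]; exact mul_ne_zero hsqrt_ne hsqrt_ne
  -- action of ρ1 T⁻¹ on basis vectors
  have hTT : ρ1 stmt10T⁻¹ * ρ1 stmt10T = 1 := by rw [← _root_.map_mul, inv_mul_cancel, _root_.map_one]
  have hT1inv : ∀ lam : A, ρ1 stmt10T⁻¹ (Pi.single lam 1)
      = stmt10e (-(q lam)) • (Pi.single lam 1 : A → ℂ) := by
    intro lam
    have h1 : ρ1 stmt10T⁻¹ (ρ1 stmt10T (Pi.single lam 1)) = Pi.single lam 1 := by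
      rw [← Module.End.mul_apply, hTT, Module.End.one_apply]
    rw [hT1, LinearMap.map_smul] at h1
    rw [s10e_neg, eq_inv_smul_iff₀ (s10e_ne_zero _)]
    exact h1
  -- symmetry of the four translation matrices
  have symm1 : (!![(1:ℤ),0;0,0])ᵀ = !![(1:ℤ),0;0,0] := by
    ext i j; fin_cases i <;> fin_cases j <;> decide
  have symm2 : (!![(-1:ℤ),0;0,0])ᵀ = !![(-1:ℤ),0;0,0] := by
    ext i j; fin_cases i <;> fin_cases j <;> decide
  have symm3 : (!![(0:ℤ),0;0,1])ᵀ = !![(0:ℤ),0;0,1] := by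
    ext i j; fin_cases i <;> fin_cases j <;> decide
  have symm4 : (!![(0:ℤ),0;0,-1])ᵀ = !![(0:ℤ),0;0,-1] := by
    ext i j; fin_cases i <;> fin_cases j <;> decide
  -- ρ2 of the four translation matrices as tensor products
  have hT2E11 : ρ2 (stmt10T2 !![1,0;0,0]) = s10tE (ρ1 stmt10T) 1 := by
    apply s10_end_ext
    rintro ⟨l1, l2⟩
    rw [s10tE_single, Module.End.one_apply, hT1, s10tens_smul_left, ← s10_single_prod]
    have h := hT2 !![1,0;0,0] symm1 (l1, l2)
    simpa using h
  have hT2mE11 : ρ2 (stmt10T2 !![-1,0;0,0]) = s10tE (ρ1 stmt10T⁻¹) 1 := by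
    apply s10_end_ext
    rintro ⟨l1, l2⟩
    rw [s10tE_single, Module.End.one_apply, hT1inv, s10tens_smul_left, ← s10_single_prod]
    have h := hT2 !![-1,0;0,0] symm2 (l1, l2)
    simpa using h
  have hT2E22 : ρ2 (stmt10T2 !![0,0;0,1]) = s10tE 1 (ρ1 stmt10T) := by
    apply s10_end_ext
    rintro ⟨l1, l2⟩
    rw [s10tE_single, Module.End.one_apply, hT1, s10tens_smul_right, ← s10_single_prod]
    have h := hT2 !![0,0;0,1] symm3 (l1, l2)
    simpa using h
  have hT2mE22 : ρ2 (stmt10T2 !![0,0;0,-1]) = s10tE 1 (ρ1 stmt10T⁻¹) := by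
    apply s10_end_ext
    rintro ⟨l1, l2⟩
    rw [s10tE_single, Module.End.one_apply, hT1inv, s10tens_smul_right, ← s10_single_prod]
    have h := hT2 !![0,0;0,-1] symm4 (l1, l2)
    simpa using h
  -- ρ2 S₂ as a tensor product
  have hS2' : ρ2 stmt10S2 = s10tE (ρ1 stmt10S) (ρ1 stmt10S) := by
    apply s10_end_ext
    rintro ⟨l1, l2⟩
    rw [hS2 (l1, l2), s10tE_single, hS1 l1, hS1 l2]
    funext p
    obtain ⟨p1, p2⟩ := p
    rw [s10_eval_sum2]
    show _ = stmt10tens _ _ (p1, p2)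
    simp only [stmt10tens]
    rw [s10_eval_sum _ _ p1, s10_eval_sum _ _ p2]
    have harg1 : (-(b p1 l1 + b p2 l2) : ℚ) = (-(b p1 l1)) + (-(b p2 l2)) := by ring
    have harg2 : (-(2 * (sig:ℚ)) / 8) = (-(sig:ℚ)/8) + (-(sig:ℚ)/8) := by ring
    rw [harg1, s10e_add, harg2, s10e_add, ← hsq]
    field_simp
  -- ρ2 of the inverse of S₂
  have hS2inv : ρ2 s10S2inv = s10tE (ρ1 stmt10S⁻¹) (ρ1 stmt10S⁻¹) := by
    have h1 : ρ2 s10S2inv * ρ2 stmt10S2 = 1 := by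
      rw [← hmul _ s10_mem_S2inv _ s10_mem_S2, s10_S2inv_mul, hone]
    calc ρ2 s10S2inv = ρ2 s10S2inv * 1 := (mul_one _).symm
      _ = ρ2 s10S2inv * (ρ2 stmt10S2 * s10tE (ρ1 stmt10S⁻¹) (ρ1 stmt10S⁻¹)) := by
          rw [hS2', s10tE_mul, ← _root_.map_mul, mul_inv_cancel, _root_.map_one, s10tE_one]
      _ = s10tE (ρ1 stmt10S⁻¹) (ρ1 stmt10S⁻¹) := by rw [← mul_assoc, h1, one_mul]
  -- memberships of partial products for γ^↑(S)
  have m1 := s10_mem_T2mE11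
  have m12 := s10_sp2_mul m1 s10_mem_S2inv
  have m123 := s10_sp2_mul m12 m1
  have m1234 := s10_sp2_mul m123 s10_mem_S2
  have hρupS : ρ2 (stmt10up stmt10S) = s10tE (ρ1 stmt10S) 1 := by
    rw [s10_upS, hmul _ m1234 _ m1, hmul _ m123 _ s10_mem_S2, hmul _ m12 _ m1,
      hmul _ m1 _ s10_mem_S2inv, hT2mE11, hS2inv, hS2', s10tE_mul, s10tE_mul, s10tE_mul,
      s10tE_mul]
    congr 1
    · rw [← _root_.map_mul, ← _root_.map_mul, ← _root_.map_mul, ← _root_.map_mul, s10_rel]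
    · simp only [one_mul, mul_one]
      rw [← _root_.map_mul, inv_mul_cancel, _root_.map_one]
  -- memberships of partial products for γ^↓(S)
  have n1 := s10_mem_T2mE22
  have n12 := s10_sp2_mul n1 s10_mem_S2inv
  have n123 := s10_sp2_mul n12 n1
  have n1234 := s10_sp2_mul n123 s10_mem_S2
  have hρdownS : ρ2 (stmt10down stmt10S) = s10tE 1 (ρ1 stmt10S) := by
    rw [s10_downS, hmul _ n1234 _ n1, hmul _ n123 _ s10_mem_S2, hmul _ n12 _ n1,
      hmul _ n1 _ s10_mem_S2inv, hT2mE22, hS2inv, hS2', s10tE_mul, s10tE_mul, s10tE_mul,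
      s10tE_mul]
    congr 1
    · simp only [one_mul, mul_one]
      rw [← _root_.map_mul, inv_mul_cancel, _root_.map_one]
    · rw [← _root_.map_mul, ← _root_.map_mul, ← _root_.map_mul, ← _root_.map_mul, s10_rel]
  -- the main induction over the group generated by S and T
  have hone_mem : (1 : Matrix (Fin 4) (Fin 4) ℤ) ∈ stmt10Sp2 := by
    show _ = _
    simp [Matrix.transpose_one]
  have main : ∀ δ : Matrix.SpecialLinearGroup (Fin 2) ℤ,
      (stmt10up δ ∈ stmt10Sp2 ∧ ρ2 (stmt10up δ) = s10tE (ρ1 δ) 1) ∧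
      (stmt10down δ ∈ stmt10Sp2 ∧ ρ2 (stmt10down δ) = s10tE 1 (ρ1 δ)) := by
    intro δ
    refine Subgroup.closure_induction (p := fun x _ =>
      (stmt10up x ∈ stmt10Sp2 ∧ ρ2 (stmt10up x) = s10tE (ρ1 x) 1) ∧
      (stmt10down x ∈ stmt10Sp2 ∧ ρ2 (stmt10down x) = s10tE 1 (ρ1 x)))
      ?_ ?_ ?_ ?_ (s10_mem_closure δ)
    · intro x hx
      rw [Set.mem_insert_iff, Set.mem_singleton_iff] at hx
      rcases hx with rfl | rfl
      · exact ⟨⟨by rw [s10_upS]; exact s10_sp2_mul m1234 m1, hρupS⟩,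
          ⟨by rw [s10_downS]; exact s10_sp2_mul n1234 n1, hρdownS⟩⟩
      · exact ⟨⟨by rw [s10_upT]; exact s10_mem_T2E11, by rw [s10_upT, hT2E11]⟩,
          ⟨by rw [s10_downT]; exact s10_mem_T2E22, by rw [s10_downT, hT2E22]⟩⟩
    · refine ⟨⟨by rw [s10_up_one]; exact hone_mem, ?_⟩,
        ⟨by rw [s10_down_one]; exact hone_mem, ?_⟩⟩
      · rw [s10_up_one, hone, _root_.map_one, s10tE_one]
      · rw [s10_down_one, hone, _root_.map_one, s10tE_one]
    · rintro x y - - ⟨⟨hxu, hxu'⟩, ⟨hxd, hxd'⟩⟩ ⟨⟨hyu, hyu'⟩, ⟨hyd, hyd'⟩⟩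
      refine ⟨⟨by rw [s10_up_mul]; exact s10_sp2_mul hxu hyu, ?_⟩,
        ⟨by rw [s10_down_mul]; exact s10_sp2_mul hxd hyd, ?_⟩⟩
      · rw [s10_up_mul, hmul _ hxu _ hyu, hxu', hyu', s10tE_mul, ← _root_.map_mul]; simp only [one_mul]
      · rw [s10_down_mul, hmul _ hxd _ hyd, hxd', hyd', s10tE_mul, ← _root_.map_mul]; simp only [one_mul]
    · rintro x - ⟨⟨hxu, hxu'⟩, ⟨hxd, hxd'⟩⟩
      have hup1 : stmt10up x * stmt10up x⁻¹ = 1 := by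
        rw [← s10_up_mul, mul_inv_cancel, s10_up_one]
      have hup1' : stmt10up x⁻¹ * stmt10up x = 1 := by
        rw [← s10_up_mul, inv_mul_cancel, s10_up_one]
      have hdown1 : stmt10down x * stmt10down x⁻¹ = 1 := by
        rw [← s10_down_mul, mul_inv_cancel, s10_down_one]
      have hdown1' : stmt10down x⁻¹ * stmt10down x = 1 := by
        rw [← s10_down_mul, inv_mul_cancel, s10_down_one]
      have hmemu : stmt10up x⁻¹ ∈ stmt10Sp2 := s10_sp2_of_inv hxu hup1
      have hmemd : stmt10down x⁻¹ ∈ stmt10Sp2 := s10_sp2_of_inv hxd hdown1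
      refine ⟨⟨hmemu, ?_⟩, ⟨hmemd, ?_⟩⟩
      · have h1 : ρ2 (stmt10up x⁻¹) * ρ2 (stmt10up x) = 1 := by
          rw [← hmul _ hmemu _ hxu, hup1', hone]
        have h2 : ρ2 (stmt10up x) * s10tE (ρ1 x⁻¹) 1 = 1 := by
          rw [hxu', s10tE_mul, ← _root_.map_mul, mul_inv_cancel, _root_.map_one]
          simp only [one_mul]
          exact s10tE_one
        calc ρ2 (stmt10up x⁻¹) = ρ2 (stmt10up x⁻¹) * 1 := (mul_one _).symm
          _ = ρ2 (stmt10up x⁻¹) * (ρ2 (stmt10up x) * s10tE (ρ1 x⁻¹) 1) := by rw [h2]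
          _ = s10tE (ρ1 x⁻¹) 1 := by rw [← mul_assoc, h1, one_mul]
      · have h1 : ρ2 (stmt10down x⁻¹) * ρ2 (stmt10down x) = 1 := by
          rw [← hmul _ hmemd _ hxd, hdown1', hone]
        have h2 : ρ2 (stmt10down x) * s10tE 1 (ρ1 x⁻¹) = 1 := by
          rw [hxd', s10tE_mul, ← _root_.map_mul, mul_inv_cancel, _root_.map_one]
          simp only [one_mul]
          exact s10tE_one
        calc ρ2 (stmt10down x⁻¹) = ρ2 (stmt10down x⁻¹) * 1 := (mul_one _).symm
          _ = ρ2 (stmt10down x⁻¹) * (ρ2 (stmt10down x) * s10tE 1 (ρ1 x⁻¹)) := by rw [h2]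
          _ = s10tE 1 (ρ1 x⁻¹) := by rw [← mul_assoc, h1, one_mul]
  obtain ⟨⟨-, hupEq⟩, ⟨-, hdownEq⟩⟩ := main γ
  constructor
  · rw [hupEq, s10tE_single, Module.End.one_apply]
  · rw [hdownEq, s10tE_single, Module.End.one_apply]
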